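/- Let A be a nonnegative irreducible real n×n matrix with n ≥ 1. Then ρ(A) is a simple root of the characteristic polynomial of A, i.e. the multiplicity of ρ(A) as a root of the characteristic polynomial of A is exactly one. -/

import Mathlib

open Matrix Polynomial
open scoped NNReal ENNReal

/-- The spectral radius of a real square matrix: the maximum modulus of the complex roots
of its characteristic polynomial. -/
noncomputable def specRad {n : ℕ} (A : Matrix (Fin n) (Fin n) ℝ) : ℝ :=
  sSup {r : ℝ | ∃ μ : ℂ,
    μ ∈ (A.map (Complex.ofReal : ℝ → ℂ)).charpoly.roots ∧ ‖μ‖ = r}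

namespace PFaux

attribute [local instance] Matrix.linftyOpNormedAddCommGroup Matrix.linftyOpNormedRing
  Matrix.linftyOpNormedAlgebra

variable {n : ℕ}

lemma map_pow' (A : Matrix (Fin n) (Fin n) ℝ) (k : ℕ) :
    (A.map (Complex.ofReal : ℝ → ℂ)) ^ k = (A ^ k).map (Complex.ofReal : ℝ → ℂ) := by
  have h : ∀ B : Matrix (Fin n) (Fin n) ℝ,
      B.map (Complex.ofReal : ℝ → ℂ) = Complex.ofRealHom.mapMatrix B := fun B => rfl
  rw [h, h, map_pow]

lemma eval_charpoly {K : Type} [Field K] (M : Matrix (Fin n) (Fin n) K) (μ : K) :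
    M.charpoly.eval μ = (μ • (1 : Matrix (Fin n) (Fin n) K) - M).det := by
  have h1 := eval_det (charmatrix M) μ
  rw [Matrix.charpoly, h1, matPolyEquiv_charmatrix, eval_sub, eval_X, eval_C]
  congr 1
  ext i j
  by_cases h : i = j <;>
    simp [Matrix.scalar_apply, Matrix.diagonal_apply, Matrix.one_apply, h]

lemma isRoot_charpoly_iff {K : Type} [Field K] (M : Matrix (Fin n) (Fin n) K) (μ : K) :
    M.charpoly.IsRoot μ ↔ ∃ x, x ≠ 0 ∧ M *ᵥ x = μ • x := by
  rw [IsRoot, eval_charpoly]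
  constructor
  · intro h
    obtain ⟨x, hx0, hx⟩ := (Matrix.exists_mulVec_eq_zero_iff).2 h
    refine ⟨x, hx0, ?_⟩
    rw [Matrix.sub_mulVec, Matrix.smul_mulVec, Matrix.one_mulVec, sub_eq_zero] at hx
    exact hx.symm
  · rintro ⟨x, hx0, hx⟩
    refine (Matrix.exists_mulVec_eq_zero_iff).1 ⟨x, hx0, ?_⟩
    rw [Matrix.sub_mulVec, Matrix.smul_mulVec, Matrix.one_mulVec, hx, sub_self]

lemma mem_spectrum_iff_isRoot (M : Matrix (Fin n) (Fin n) ℂ) (μ : ℂ) :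
    μ ∈ spectrum ℂ M ↔ M.charpoly.IsRoot μ := by
  rw [spectrum.mem_iff, Algebra.algebraMap_eq_smul_one, Matrix.isUnit_iff_isUnit_det,
    isUnit_iff_ne_zero, not_not, IsRoot, eval_charpoly]

lemma specRad_spec (hn : 1 ≤ n) (A : Matrix (Fin n) (Fin n) ℝ) :
    (∃ μ ∈ (A.map (Complex.ofReal : ℝ → ℂ)).charpoly.roots, ‖μ‖ = specRad A) ∧
      ∀ ν ∈ (A.map (Complex.ofReal : ℝ → ℂ)).charpoly.roots, ‖ν‖ ≤ specRad A := by
  classical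
  have hdeg : (A.map (Complex.ofReal : ℝ → ℂ)).charpoly.natDegree = n := by simp
  have hcard : Multiset.card (A.map (Complex.ofReal : ℝ → ℂ)).charpoly.roots = n := by
    have h := Polynomial.splits_iff_card_roots.mp
      (IsAlgClosed.splits (A.map (Complex.ofReal : ℝ → ℂ)).charpoly)
    rw [hdeg] at h
    exact h
  obtain ⟨μ0, hμ0⟩ : ∃ μ, μ ∈ (A.map (Complex.ofReal : ℝ → ℂ)).charpoly.roots :=
    Multiset.card_pos_iff_exists_mem.mp (by rw [hcard]; omega)
  have hne : {r : ℝ | ∃ μ : ℂ,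
      μ ∈ (A.map (Complex.ofReal : ℝ → ℂ)).charpoly.roots ∧ ‖μ‖ = r}.Nonempty :=
    ⟨‖μ0‖, μ0, hμ0, rfl⟩
  have hfin : {r : ℝ | ∃ μ : ℂ,
      μ ∈ (A.map (Complex.ofReal : ℝ → ℂ)).charpoly.roots ∧ ‖μ‖ = r}.Finite := by
    have heq : {r : ℝ | ∃ μ : ℂ,
        μ ∈ (A.map (Complex.ofReal : ℝ → ℂ)).charpoly.roots ∧ ‖μ‖ = r}
        = (fun μ : ℂ => ‖μ‖) '' {μ : ℂ | μ ∈ (A.map (Complex.ofReal : ℝ → ℂ)).charpoly.roots} := by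
      ext r
      simp [Set.mem_image]
    rw [heq]
    exact Set.Finite.image _ ((A.map (Complex.ofReal : ℝ → ℂ)).charpoly.roots.finite_toSet)
  constructor
  · have h1 := Set.Nonempty.csSup_mem hne hfin
    rw [← specRad] at h1
    exact h1
  · intro ν hν
    have h2 := le_csSup hfin.bddAbove (show ‖ν‖ ∈ {r : ℝ | ∃ μ : ℂ,
      μ ∈ (A.map (Complex.ofReal : ℝ → ℂ)).charpoly.roots ∧ ‖μ‖ = r} from ⟨ν, hν, rfl⟩)
    rw [← specRad] at h2
    exact h2

lemma specRad_nonneg (hn : 1 ≤ n) (A : Matrix (Fin n) (Fin n) ℝ) : 0 ≤ specRad A := by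
  obtain ⟨⟨μ, _, hμ⟩, -⟩ := specRad_spec hn A
  simpa [← hμ] using norm_nonneg μ

lemma entry_pow_nonneg {A : Matrix (Fin n) (Fin n) ℝ} (hA : ∀ i j, 0 ≤ A i j) (k : ℕ) :
    ∀ i j, 0 ≤ (A ^ k) i j := by
  induction k with
  | zero => intro i j; by_cases h : i = j <;> simp [Matrix.one_apply, h]
  | succ k ih =>
    intro i j
    rw [pow_succ, Matrix.mul_apply]
    exact Finset.sum_nonneg fun l _ => mul_nonneg (ih i l) (hA l j)

lemma mulVec_mono {A : Matrix (Fin n) (Fin n) ℝ} (hA : ∀ i j, 0 ≤ A i j)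
    {x y : Fin n → ℝ} (hxy : ∀ i, x i ≤ y i) : ∀ i, (A *ᵥ x) i ≤ (A *ᵥ y) i := by
  intro i
  simp only [Matrix.mulVec, dotProduct]
  exact Finset.sum_le_sum fun j _ => mul_le_mul_of_nonneg_left (hxy j) (hA i j)

lemma mulVec_nonneg {A : Matrix (Fin n) (Fin n) ℝ} (hA : ∀ i j, 0 ≤ A i j)
    {x : Fin n → ℝ} (hx : ∀ i, 0 ≤ x i) : ∀ i, 0 ≤ (A *ᵥ x) i := by
  simpa using mulVec_mono hA (x := 0) (y := x) (fun i => hx i)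

lemma mulVec_pos {P : Matrix (Fin n) (Fin n) ℝ} (hP : ∀ i j, 0 < P i j)
    {x : Fin n → ℝ} (hx : ∀ i, 0 ≤ x i) (hx0 : x ≠ 0) : ∀ i, 0 < (P *ᵥ x) i := by
  obtain ⟨j0, hj0⟩ : ∃ j, x j ≠ 0 := Function.ne_iff.mp hx0
  have hj0' : 0 < x j0 := lt_of_le_of_ne (hx j0) (Ne.symm hj0)
  intro i
  simp only [Matrix.mulVec, dotProduct]
  exact Finset.sum_pos' (fun j _ => mul_nonneg (hP i j).le (hx j))
    ⟨j0, Finset.mem_univ _, mul_pos (hP i j0) hj0'⟩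

lemma exists_pos_pow {A : Matrix (Fin n) (Fin n) ℝ} (hA : ∀ i j, 0 ≤ A i j)
    (hirr : ∀ i j, ∃ k : ℕ, 1 ≤ k ∧ 0 < (A ^ k) i j) :
    ∃ m : ℕ, ∀ i j, 0 < ((1 + A) ^ m) i j := by
  classical
  have h1A : ∀ i j, 0 ≤ (1 + A) i j := by
    intro i j
    have he : (1 + A) i j = (1 : Matrix (Fin n) (Fin n) ℝ) i j + A i j := rfl
    by_cases h : i = j
    · subst h
      rw [he, Matrix.one_apply_eq]
      linarith [hA i i]
    · rw [he, Matrix.one_apply_ne h, zero_add]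
      exact hA i j
  have hmono : ∀ (k : ℕ) (i j : Fin n), ((1 + A) ^ k) i j ≤ ((1 + A) ^ (k + 1)) i j := by
    intro k i j
    have : (1 + A) ^ (k + 1) = (1 + A) ^ k + (1 + A) ^ k * A := by
      rw [pow_succ, mul_add, mul_one]
    rw [this, Matrix.add_apply]
    have : 0 ≤ ((1 + A) ^ k * A) i j := by
      rw [Matrix.mul_apply]
      exact Finset.sum_nonneg fun l _ => mul_nonneg (entry_pow_nonneg h1A k i l) (hA l j)
    linarith
  have hchain : ∀ (k m : ℕ), k ≤ m → ∀ i j, ((1 + A) ^ k) i j ≤ ((1 + A) ^ m) i j := by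
    intro k m hkm
    induction m, hkm using Nat.le_induction with
    | base => intro i j; exact le_rfl
    | succ m hkm ih => intro i j; exact le_trans (ih i j) (hmono m i j)
  have hge : ∀ (k : ℕ) (i j : Fin n), (A ^ k) i j ≤ ((1 + A) ^ k) i j := by
    intro k
    induction k with
    | zero => intro i j; exact le_rfl
    | succ k ih =>
      intro i j
      have h1 : (A ^ (k + 1)) i j ≤ ((1 + A) ^ k * A) i j := by
        rw [pow_succ, Matrix.mul_apply, Matrix.mul_apply]
        exact Finset.sum_le_sum fun l _ => mul_le_mul_of_nonneg_right (ih i l) (hA l j)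
      have h2 : (1 + A) ^ (k + 1) = (1 + A) ^ k + (1 + A) ^ k * A := by
        rw [pow_succ, mul_add, mul_one]
      have h3 : 0 ≤ ((1 + A) ^ k) i j := entry_pow_nonneg h1A k i j
      rw [h2, Matrix.add_apply]
      linarith
  choose k hk1 hk2 using hirr
  refine ⟨(Finset.univ : Finset (Fin n)).sup fun i => (Finset.univ : Finset (Fin n)).sup (k i), ?_⟩
  intro i j
  have hle : k i j ≤ (Finset.univ : Finset (Fin n)).sup fun i => Finset.univ.sup (k i) :=
    le_trans (Finset.le_sup (f := k i) (Finset.mem_univ j))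
      (Finset.le_sup (f := fun i => Finset.univ.sup (k i)) (Finset.mem_univ i))
  exact lt_of_lt_of_le (lt_of_lt_of_le (hk2 i j) (hge (k i j) i j)) (hchain _ _ hle i j)

lemma le_specRad_of_subeig (hn : 1 ≤ n) (A : Matrix (Fin n) (Fin n) ℝ)
    (hA : ∀ i j, 0 ≤ A i j) {u : Fin n → ℝ} {s : ℝ}
    (hu : ∀ i, 0 < u i) (h : ∀ i, s * u i ≤ (A *ᵥ u) i) : s ≤ specRad A := by
  rcases le_or_gt s 0 with hs | hs
  · exact le_trans hs (specRad_nonneg hn A)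
  classical
  -- iterated sub-eigenvector inequality
  have hAk : ∀ (k : ℕ) (i : Fin n), s ^ k * u i ≤ ((A ^ k) *ᵥ u) i := by
    intro k
    induction k with
    | zero => intro i; simp [Matrix.one_mulVec]
    | succ k ih =>
      intro i
      have h1 : (A ^ (k + 1)) *ᵥ u = A *ᵥ ((A ^ k) *ᵥ u) := by
        rw [pow_succ', ← Matrix.mulVec_mulVec]
      have h2 : ∀ j, (s ^ k • u) j ≤ ((A ^ k) *ᵥ u) j := fun j => by
        simpa using ih j
      have h3 := mulVec_mono hA h2 i
      have h4 : (A *ᵥ (s ^ k • u)) i = s ^ k * (A *ᵥ u) i := by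
        rw [Matrix.mulVec_smul]
        simp
      rw [h1]
      calc s ^ (k + 1) * u i = s ^ k * (s * u i) := by ring
        _ ≤ s ^ k * (A *ᵥ u) i :=
          mul_le_mul_of_nonneg_left (h i) (pow_nonneg hs.le k)
        _ = (A *ᵥ (s ^ k • u)) i := h4.symm
        _ ≤ (A *ᵥ ((A ^ k) *ᵥ u)) i := h3
  -- max and min of u
  have hne : (Finset.univ : Finset (Fin n)).Nonempty := by
    refine ⟨⟨0, hn⟩, Finset.mem_univ _⟩
  obtain ⟨imax, -, himax⟩ := Finset.exists_max_image Finset.univ u hne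
  obtain ⟨imin, -, himin⟩ := Finset.exists_min_image Finset.univ u hne
  set c : ℝ := u imin / u imax with hc
  have hcpos : 0 < c := div_pos (hu imin) (hu imax)
  set Mc := A.map (Complex.ofReal : ℝ → ℂ) with hMc
  -- norm lower bound
  have hnorm : ∀ k : ℕ, s ^ k * c ≤ ‖Mc ^ k‖ := by
    intro k
    have h4 : s ^ k * u imin ≤ ∑ j, (A ^ k) imin j * u j := by
      have := hAk k imin
      simpa [Matrix.mulVec, dotProduct] using this
    have h5 : ∑ j, (A ^ k) imin j * u j ≤ (∑ j, (A ^ k) imin j) * u imax := by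
      rw [Finset.sum_mul]
      exact Finset.sum_le_sum fun j _ =>
        mul_le_mul_of_nonneg_left (himax j (Finset.mem_univ j)) (entry_pow_nonneg hA k imin j)
    have h6 : s ^ k * c ≤ ∑ j, (A ^ k) imin j := by
      rw [hc, mul_div_assoc', div_le_iff₀ (hu imax)]
      exact le_trans h4 h5
    refine le_trans h6 ?_
    have h7 : (∑ j, (A ^ k) imin j) = ((∑ j, ‖(Mc ^ k) imin j‖₊ : ℝ≥0) : ℝ) := by
      push_cast
      refine Finset.sum_congr rfl fun j _ => ?_
      rw [hMc, map_pow' A k]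
      simp only [Matrix.map_apply]
      rw [Complex.norm_real, Real.norm_of_nonneg (entry_pow_nonneg hA k imin j)]
    rw [h7, Matrix.linfty_opNorm_def]
    exact_mod_cast NNReal.coe_le_coe.mpr
      (Finset.le_sup (f := fun i => ∑ j, ‖(Mc ^ k) i j‖₊) (Finset.mem_univ imin))
  -- limit of the lower bound
  have hlim : Filter.Tendsto (fun k : ℕ => (s ^ k * c) ^ ((1 : ℝ) / k)) Filter.atTop (nhds s) := by
    have h2 : Filter.Tendsto (fun k : ℕ => ((1 : ℝ) / k)) Filter.atTop (nhds 0) :=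
      tendsto_one_div_atTop_nhds_zero_nat
    have h3 : Filter.Tendsto (fun k : ℕ => c ^ ((1 : ℝ) / k)) Filter.atTop (nhds 1) := by
      have := (Real.continuousAt_const_rpow (a := c) (ne_of_gt hcpos)).tendsto.comp h2
      simpa [Real.rpow_zero, Function.comp_def] using this
    have h4 : Filter.Tendsto (fun k : ℕ => s * c ^ ((1 : ℝ) / k)) Filter.atTop (nhds s) := by
      simpa using h3.const_mul s
    refine h4.congr' ?_
    filter_upwards [Filter.eventually_ge_atTop 1] with k hk
    have hk0 : (k : ℝ) ≠ 0 := Nat.cast_ne_zero.mpr (by omega)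
    rw [Real.mul_rpow (pow_nonneg hs.le k) hcpos.le]
    rw [← Real.rpow_natCast s k, ← Real.rpow_mul hs.le, mul_one_div, div_self hk0,
      Real.rpow_one, mul_comm]
  -- Gelfand's formula
  have hgel := spectrum.pow_norm_pow_one_div_tendsto_nhds_spectralRadius Mc
  have hle1 : ENNReal.ofReal s ≤ spectralRadius ℂ Mc := by
    refine le_of_tendsto_of_tendsto ((ENNReal.continuous_ofReal.tendsto s).comp hlim) hgel ?_
    filter_upwards with k
    exact ENNReal.ofReal_le_ofReal
      (Real.rpow_le_rpow (mul_nonneg (pow_nonneg hs.le k) hcpos.le) (hnorm k)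
        (by positivity))
  have hle2 : spectralRadius ℂ Mc ≤ ENNReal.ofReal (specRad A) := by
    rw [spectralRadius]
    refine iSup₂_le fun μ hμ => ?_
    rw [show ((‖μ‖₊ : ℝ≥0) : ℝ≥0∞) = ENNReal.ofReal ‖μ‖ from (ENNReal.ofReal_eq_coe_nnreal (norm_nonneg μ)).symm]
    refine ENNReal.ofReal_le_ofReal ?_
    refine (specRad_spec hn A).2 μ ?_
    rw [Polynomial.mem_roots']
    exact ⟨(Matrix.charpoly_monic _).ne_zero, (mem_spectrum_iff_isRoot Mc μ).mp hμ⟩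
  exact (ENNReal.ofReal_le_ofReal_iff (specRad_nonneg hn A)).mp (le_trans hle1 hle2)

lemma exists_perron (hn : 1 ≤ n) (A : Matrix (Fin n) (Fin n) ℝ)
    (hA : ∀ i j, 0 ≤ A i j)
    (hirr : ∀ i j, ∃ k : ℕ, 1 ≤ k ∧ 0 < (A ^ k) i j) :
    ∃ v : Fin n → ℝ, (∀ i, 0 < v i) ∧ A *ᵥ v = specRad A • v := by
  classical
  obtain ⟨m, hP⟩ := exists_pos_pow hA hirr
  set P := (1 + A) ^ m with hPdef
  have hPnn : ∀ i j, 0 ≤ P i j := fun i j => (hP i j).le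
  have hcomm : A * P = P * A := by
    rw [hPdef]
    exact (((Commute.one_right A).add_right (Commute.refl A)).pow_right m).eq
  have hconj : ∀ x : Fin n → ℝ, A *ᵥ (P *ᵥ x) = P *ᵥ (A *ᵥ x) := by
    intro x
    rw [Matrix.mulVec_mulVec, Matrix.mulVec_mulVec, hcomm]
  set R := specRad A with hR
  obtain ⟨⟨μ0, hμ0, hμ0abs⟩, -⟩ := specRad_spec hn A
  have hμ0root : (A.map (Complex.ofReal : ℝ → ℂ)).charpoly.IsRoot μ0 :=
    (Polynomial.mem_roots'.mp hμ0).2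
  obtain ⟨x, hx0, hx⟩ := (isRoot_charpoly_iff _ μ0).mp hμ0root
  set y : Fin n → ℝ := fun i => ‖x i‖ with hy
  have hynn : ∀ i, 0 ≤ y i := fun i => norm_nonneg _
  have hy0 : y ≠ 0 := by
    obtain ⟨j, hj⟩ := Function.ne_iff.mp hx0
    intro hcon
    apply hj
    have := congrFun hcon j
    simpa [hy, norm_eq_zero] using this
  have hsub : ∀ i, R * y i ≤ (A *ᵥ y) i := by
    intro i
    have h1 : ((A.map (Complex.ofReal : ℝ → ℂ)) *ᵥ x) i = ∑ j, (A i j : ℂ) * x j := by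
      simp [Matrix.mulVec, dotProduct, Matrix.map_apply]
    calc R * y i = ‖μ0 * x i‖ := by
          simp [norm_mul, hμ0abs, hR, hy]
      _ = ‖∑ j, (A i j : ℂ) * x j‖ := by
          rw [← h1, hx]
          rfl
      _ ≤ ∑ j, ‖(A i j : ℂ) * x j‖ := norm_sum_le _ _
      _ = (A *ᵥ y) i := by
          simp only [Matrix.mulVec, dotProduct]
          refine Finset.sum_congr rfl fun j _ => ?_
          rw [norm_mul, Complex.norm_real, Real.norm_eq_abs, abs_of_nonneg (hA i j)]
  set u := P *ᵥ y with hu_def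
  have hu : ∀ i, 0 < u i := mulVec_pos hP hynn hy0
  have hAu : ∀ i, R * u i ≤ (A *ᵥ u) i := by
    intro i
    have h1 : A *ᵥ u = P *ᵥ (A *ᵥ y) := hconj y
    have h2 : ∀ j, (R • y) j ≤ (A *ᵥ y) j := fun j => hsub j
    have h3 := mulVec_mono hPnn h2 i
    rw [Matrix.mulVec_smul] at h3
    rw [h1]
    simpa using h3
  by_cases hd0 : A *ᵥ u = R • u
  · exact ⟨u, hu, hd0⟩
  · exfalso
    set d := A *ᵥ u - R • u with hd_def
    have hd : ∀ i, 0 ≤ d i := fun i => by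
      have := hAu i
      simp [hd_def]
      linarith
    have hdne : d ≠ 0 := fun hcon => hd0 (by rwa [hd_def, sub_eq_zero] at hcon)
    set u' := P *ᵥ u with hu'_def
    have hu' : ∀ i, 0 < u' i := mulVec_pos hP (fun i => (hu i).le)
      (fun hcon => by simpa [hcon] using hu ⟨0, hn⟩)
    have hPd : ∀ i, 0 < (P *ᵥ d) i := mulVec_pos hP hd hdne
    have hkey0 : A *ᵥ u' - R • u' = P *ᵥ d := by
      rw [hu'_def, hconj u, hd_def, Matrix.mulVec_sub, Matrix.mulVec_smul]
    have hne : (Finset.univ : Finset (Fin n)).Nonempty := ⟨⟨0, hn⟩, Finset.mem_univ _⟩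
    set ε := Finset.univ.inf' hne (fun i => (P *ᵥ d) i / u' i) with hε
    have hεpos : 0 < ε := by
      rw [hε, Finset.lt_inf'_iff]
      exact fun i _ => div_pos (hPd i) (hu' i)
    have hkey : ∀ i, (R + ε) * u' i ≤ (A *ᵥ u') i := by
      intro i
      have h1 : ε ≤ (P *ᵥ d) i / u' i := Finset.inf'_le _ (Finset.mem_univ i)
      have h2 : ε * u' i ≤ (P *ᵥ d) i := by
        rw [← le_div_iff₀ (hu' i)]
        exact h1
      have h3 : (A *ᵥ u') i - R * u' i = (P *ᵥ d) i := by
        have := congrFun hkey0 i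
        simpa [sub_eq_iff_eq_add] using this
      nlinarith
    have := le_specRad_of_subeig hn A hA hu' hkey
    rw [← hR] at this
    linarith

lemma charpoly_transpose {R : Type} [CommRing R] (M : Matrix (Fin n) (Fin n) R) :
    Mᵀ.charpoly = M.charpoly := by
  rw [Matrix.charpoly, Matrix.charpoly, ← Matrix.det_transpose (charmatrix M)]
  congr 1
  ext i j
  by_cases h : i = j
  · subst h
    simp [charmatrix_apply_eq, Matrix.transpose_apply]
  · rw [Matrix.transpose_apply, charmatrix_apply_ne _ _ _ h,
      charmatrix_apply_ne _ _ _ (Ne.symm h), Matrix.transpose_apply]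

lemma specRad_transpose (A : Matrix (Fin n) (Fin n) ℝ) : specRad Aᵀ = specRad A := by
  have h : (Aᵀ.map (Complex.ofReal : ℝ → ℂ)).charpoly
      = (A.map (Complex.ofReal : ℝ → ℂ)).charpoly := by
    rw [Matrix.transpose_map, charpoly_transpose]
  rw [specRad, specRad, h]

lemma eigvec_span (hn : 1 ≤ n) (A : Matrix (Fin n) (Fin n) ℝ)
    (hA : ∀ i j, 0 ≤ A i j)
    (hirr : ∀ i j, ∃ k : ℕ, 1 ≤ k ∧ 0 < (A ^ k) i j)
    {v : Fin n → ℝ} (hv : ∀ i, 0 < v i) (hAv : A *ᵥ v = specRad A • v)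
    {y : Fin n → ℝ} (hy : A *ᵥ y = specRad A • y) : ∃ t : ℝ, y = t • v := by
  classical
  obtain ⟨m, hP⟩ := exists_pos_pow hA hirr
  set R := specRad A with hR
  have hR0 : 0 ≤ R := specRad_nonneg hn A
  have hne : (Finset.univ : Finset (Fin n)).Nonempty := ⟨⟨0, hn⟩, Finset.mem_univ _⟩
  set t := Finset.univ.inf' hne (fun i => y i / v i) with ht
  obtain ⟨i0, -, hi0⟩ := Finset.exists_mem_eq_inf' hne (fun i => y i / v i)
  set z := y - t • v with hz_def
  have hz0 : ∀ i, 0 ≤ z i := by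
    intro i
    have h1 : t ≤ y i / v i := Finset.inf'_le _ (Finset.mem_univ i)
    have h2 : t * v i ≤ y i := by
      rw [← le_div_iff₀ (hv i)]
      exact h1
    simp [hz_def]
    linarith
  have hzi0 : z i0 = 0 := by
    have : t = y i0 / v i0 := hi0
    simp [hz_def, this, div_mul_cancel₀ _ (ne_of_gt (hv i0))]
  have hAz : A *ᵥ z = R • z := by
    rw [hz_def, Matrix.mulVec_sub, hy, Matrix.mulVec_smul, hAv]
    rw [smul_comm t R v]
    exact (smul_sub R y (t • v)).symm
  have hPz : ∀ k : ℕ, ((1 + A) ^ k) *ᵥ z = ((1 + R) ^ k) • z := by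
    intro k
    induction k with
    | zero => simp [Matrix.one_mulVec]
    | succ k ih =>
      have h1 : (1 + A) ^ (k + 1) *ᵥ z = (1 + A) ^ k *ᵥ ((1 + A) *ᵥ z) := by
        rw [Matrix.mulVec_mulVec, ← pow_succ]
      have h2 : (1 + A) *ᵥ z = (1 + R) • z := by
        rw [Matrix.add_mulVec, Matrix.one_mulVec, hAz]
        funext i
        simp
        ring
      rw [h1, h2, Matrix.mulVec_smul, ih, smul_smul, ← pow_succ']
  by_cases hz : z = 0
  · refine ⟨t, ?_⟩
    rw [hz_def] at hz
    exact (sub_eq_zero.mp hz).symm ▸ rfl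
  · exfalso
    have h1 := mulVec_pos hP hz0 hz i0
    have h2 := congrFun (hPz m) i0
    simp [hzi0] at h2
    rw [h2] at h1
    exact lt_irrefl 0 h1

lemma eigvec_span_complex (hn : 1 ≤ n) (A : Matrix (Fin n) (Fin n) ℝ)
    (hA : ∀ i j, 0 ≤ A i j)
    (hirr : ∀ i j, ∃ k : ℕ, 1 ≤ k ∧ 0 < (A ^ k) i j)
    {v : Fin n → ℝ} (hv : ∀ i, 0 < v i) (hAv : A *ᵥ v = specRad A • v)
    {y : Fin n → ℂ} (hy : (A.map (Complex.ofReal : ℝ → ℂ)) *ᵥ y = (specRad A : ℂ) • y) :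
    ∃ t : ℂ, y = t • (fun i => (v i : ℂ)) := by
  have hre : A *ᵥ (fun i => (y i).re) = specRad A • (fun i => (y i).re) := by
    funext i
    have h1 := congrFun hy i
    have h2 : ((A.map (Complex.ofReal : ℝ → ℂ)) *ᵥ y) i = ∑ j, (A i j : ℂ) * y j := by
      simp [Matrix.mulVec, dotProduct, Matrix.map_apply]
    have h3 : (∑ j, (A i j : ℂ) * y j).re = ∑ j, A i j * (y j).re := by
      rw [Complex.re_sum]
      exact Finset.sum_congr rfl fun j _ => Complex.re_ofReal_mul _ _
    have h4 : (((specRad A : ℂ) • y) i).re = specRad A * (y i).re := by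
      simp [Complex.re_ofReal_mul]
    calc (A *ᵥ fun i => (y i).re) i = ∑ j, A i j * (y j).re := by
          simp [Matrix.mulVec, dotProduct]
      _ = (((A.map (Complex.ofReal : ℝ → ℂ)) *ᵥ y) i).re := by rw [h2, h3]
      _ = specRad A * (y i).re := by rw [h1, h4]
      _ = (specRad A • fun i => (y i).re) i := rfl
  have him : A *ᵥ (fun i => (y i).im) = specRad A • (fun i => (y i).im) := by
    funext i
    have h1 := congrFun hy i
    have h2 : ((A.map (Complex.ofReal : ℝ → ℂ)) *ᵥ y) i = ∑ j, (A i j : ℂ) * y j := by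
      simp [Matrix.mulVec, dotProduct, Matrix.map_apply]
    have h3 : (∑ j, (A i j : ℂ) * y j).im = ∑ j, A i j * (y j).im := by
      rw [Complex.im_sum]
      exact Finset.sum_congr rfl fun j _ => Complex.im_ofReal_mul _ _
    have h4 : (((specRad A : ℂ) • y) i).im = specRad A * (y i).im := by
      simp [Complex.im_ofReal_mul]
    calc (A *ᵥ fun i => (y i).im) i = ∑ j, A i j * (y j).im := by
          simp [Matrix.mulVec, dotProduct]
      _ = (((A.map (Complex.ofReal : ℝ → ℂ)) *ᵥ y) i).im := by rw [h2, h3]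
      _ = specRad A * (y i).im := by rw [h1, h4]
      _ = (specRad A • fun i => (y i).im) i := rfl
  obtain ⟨a, ha⟩ := eigvec_span hn A hA hirr hv hAv hre
  obtain ⟨b, hb⟩ := eigvec_span hn A hA hirr hv hAv him
  refine ⟨(a : ℂ) + (b : ℂ) * Complex.I, ?_⟩
  funext i
  have h5 : (y i).re = a * v i := congrFun ha i
  have h6 : (y i).im = b * v i := congrFun hb i
  rw [← Complex.re_add_im (y i), h5, h6]
  simp
  push_cast
  ring

lemma mulVec_map_real (A : Matrix (Fin n) (Fin n) ℝ) (x : Fin n → ℝ) :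
    (A.map (Complex.ofReal : ℝ → ℂ)) *ᵥ (fun i => (x i : ℂ)) = fun i => ((A *ᵥ x) i : ℂ) := by
  funext i
  simp only [Matrix.mulVec, dotProduct, Matrix.map_apply]
  push_cast
  rfl

lemma charpoly_sub_smul_one {K : Type} [Field K] (M : Matrix (Fin n) (Fin n) K) (μ : K) :
    (M - μ • 1).charpoly = M.charpoly.comp (X + C μ) := by
  let τ : K[X] →+* K[X] := Polynomial.eval₂RingHom Polynomial.C (X + C μ)
  have hcomp : ∀ p : K[X], p.comp (X + C μ) = τ p := fun p => by
    simp [τ, Polynomial.comp, Polynomial.coe_eval₂RingHom]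
  rw [Matrix.charpoly, Matrix.charpoly, hcomp, RingHom.map_det]
  congr 1
  ext i j : 2
  rw [RingHom.mapMatrix_apply, Matrix.map_apply]
  by_cases h : i = j
  · subst h
    rw [charmatrix_apply_eq, charmatrix_apply_eq]
    rw [show τ (X - C (M i i)) = X + C μ - C (M i i) by
      simp [τ, Polynomial.eval₂_sub]]
    have he : (M - μ • 1) i i = M i i - μ := by
      simp [Matrix.sub_apply, Matrix.smul_apply, Matrix.one_apply_eq]
    rw [he, map_sub]
    ring
  · rw [charmatrix_apply_ne _ _ _ h, charmatrix_apply_ne _ _ _ h]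
    have he : (M - μ • 1) i j = M i j := by
      simp [Matrix.sub_apply, Matrix.smul_apply, Matrix.one_apply_ne h]
    rw [he]
    simp [τ]

end PFaux

theorem specRad_simple_root_of_irreducible {n : ℕ} (hn : 1 ≤ n)
    (A : Matrix (Fin n) (Fin n) ℝ)
    (hA : ∀ i j, 0 ≤ A i j)
    (hirr : ∀ i j, ∃ k : ℕ, 1 ≤ k ∧ 0 < (A ^ k) i j) :
    A.charpoly.rootMultiplicity (specRad A) = 1 := by
  classical
  obtain ⟨v, hv, hAv⟩ := PFaux.exists_perron hn A hA hirr
  have hAT : ∀ i j, 0 ≤ Aᵀ i j := fun i j => hA j i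
  have hirrT : ∀ i j, ∃ k : ℕ, 1 ≤ k ∧ 0 < (Aᵀ ^ k) i j := by
    intro i j
    obtain ⟨k, hk1, hk2⟩ := hirr j i
    refine ⟨k, hk1, ?_⟩
    rw [← Matrix.transpose_pow, Matrix.transpose_apply]
    exact hk2
  obtain ⟨w, hw, hAw⟩ := PFaux.exists_perron hn Aᵀ hAT hirrT
  rw [PFaux.specRad_transpose] at hAw
  set R := specRad A with hR
  have hR0 : 0 ≤ R := PFaux.specRad_nonneg hn A
  set Mc := A.map (Complex.ofReal : ℝ → ℂ) with hMc
  set N : Matrix (Fin n) (Fin n) ℂ := Mc - (R : ℂ) • 1 with hN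
  set vc : Fin n → ℂ := fun i => (v i : ℂ) with hvc
  set wc : Fin n → ℂ := fun i => (w i : ℂ) with hwc
  have hvc0 : vc ≠ 0 := by
    intro hcon
    have h := congrFun hcon ⟨0, hn⟩
    rw [hvc] at h
    simp only [Pi.zero_apply, Complex.ofReal_eq_zero] at h
    exact (ne_of_gt (hv ⟨0, hn⟩)) h
  have hMcv : Mc *ᵥ vc = (R : ℂ) • vc := by
    rw [hMc, hvc, PFaux.mulVec_map_real A v, hAv]
    funext i
    simp only [Pi.smul_apply, smul_eq_mul]
    push_cast
    rfl
  have hMcw : Mcᵀ *ᵥ wc = (R : ℂ) • wc := by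
    have h1 : Mcᵀ = Aᵀ.map (Complex.ofReal : ℝ → ℂ) := by
      rw [hMc, Matrix.transpose_map]
    rw [h1, hwc, PFaux.mulVec_map_real Aᵀ w, hAw]
    funext i
    simp only [Pi.smul_apply, smul_eq_mul]
    push_cast
    rfl
  -- multiplicty transfer to ℂ
  have hmapc : Mc.charpoly = A.charpoly.map Complex.ofRealHom := by
    rw [hMc, show (A.map (Complex.ofReal : ℝ → ℂ)) = A.map (Complex.ofRealHom : ℝ →+* ℂ) from rfl]
    exact Matrix.charpoly_map A Complex.ofRealHom
  have hmult1 : A.charpoly.rootMultiplicity R = Mc.charpoly.rootMultiplicity (R : ℂ) := by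
    rw [hmapc]
    exact Polynomial.eq_rootMultiplicity_map (f := Complex.ofRealHom) Complex.ofReal_injective R
  have hmult2 : Mc.charpoly.rootMultiplicity (R : ℂ) = N.charpoly.natTrailingDegree := by
    rw [Polynomial.rootMultiplicity_eq_natTrailingDegree, hN, PFaux.charpoly_sub_smul_one]
  have hφeq : N.charpoly = (Matrix.toLin' N).charpoly := by
    rw [← LinearMap.charpoly_toMatrix (Matrix.toLin' N) (Pi.basisFun ℂ (Fin n)),
      LinearMap.toMatrix_eq_toMatrix', LinearMap.toMatrix'_toLin']
  have hpow : ∀ (k : ℕ) (x : Fin n → ℂ), ((Matrix.toLin' N) ^ k) x = (N ^ k) *ᵥ x := by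
    intro k
    induction k with
    | zero => intro x; simp [Matrix.one_mulVec]
    | succ k ih =>
      intro x
      rw [pow_succ, Module.End.mul_apply, ih (Matrix.toLin' N x), Matrix.toLin'_apply,
        Matrix.mulVec_mulVec, ← pow_succ]
  have hsum : (0 : ℝ) < ∑ i, w i * v i :=
    Finset.sum_pos (fun i _ => mul_pos (hw i) (hv i)) ⟨⟨0, hn⟩, Finset.mem_univ _⟩
  have hker1 : ∀ x : Fin n → ℂ, N *ᵥ x = 0 → ∃ t : ℂ, x = t • vc := by
    intro x hx
    rw [hN, Matrix.sub_mulVec, Matrix.smul_mulVec, Matrix.one_mulVec, sub_eq_zero] at hx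
    exact PFaux.eigvec_span_complex hn A hA hirr hv hAv (by rw [← hMc]; exact hx)
  have hker2 : ∀ x : Fin n → ℂ, N *ᵥ (N *ᵥ x) = 0 → N *ᵥ x = 0 := by
    intro x hxx
    obtain ⟨c, hc⟩ := hker1 _ hxx
    have hwN : wc ᵥ* N = 0 := by
      have h1 : wc ᵥ* N = Nᵀ *ᵥ wc := (Matrix.mulVec_transpose N wc).symm
      rw [h1, hN, Matrix.transpose_sub, Matrix.transpose_smul, Matrix.transpose_one,
        Matrix.sub_mulVec, Matrix.smul_mulVec, Matrix.one_mulVec, hMcw, sub_self]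
    have hdot : wc ⬝ᵥ (N *ᵥ x) = 0 := by
      rw [Matrix.dotProduct_mulVec, hwN, zero_dotProduct]
    rw [hc] at hdot
    have hdot2 : wc ⬝ᵥ (c • vc) = c * ((∑ i, w i * v i : ℝ) : ℂ) := by
      simp only [dotProduct, hvc, hwc, Pi.smul_apply, smul_eq_mul]
      push_cast
      rw [Finset.mul_sum]
      exact Finset.sum_congr rfl fun i _ => by ring
    rw [hdot2] at hdot
    have hc0 : c = 0 := by
      rcases mul_eq_zero.mp hdot with h | h
      · exact h
      · exfalso
        rw [Complex.ofReal_eq_zero] at h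
        exact (ne_of_gt hsum) h
    rw [hc, hc0, zero_smul]
  have hkerk : ∀ (k : ℕ) (x : Fin n → ℂ), (N ^ k) *ᵥ x = 0 → N *ᵥ x = 0 := by
    intro k
    induction k with
    | zero =>
      intro x hx
      rw [pow_zero, Matrix.one_mulVec] at hx
      rw [hx, Matrix.mulVec_zero]
    | succ k ih =>
      intro x hx
      refine hker2 x (ih _ ?_)
      rw [Matrix.mulVec_mulVec, ← pow_succ]
      exact hx
  have hspan : Module.End.maxGenEigenspace (Matrix.toLin' N) 0 = Submodule.span ℂ {vc} := by
    apply le_antisymm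
    · intro x hx
      rw [Module.End.mem_maxGenEigenspace] at hx
      obtain ⟨k, hk⟩ := hx
      simp only [zero_smul, sub_zero] at hk
      rw [hpow k x] at hk
      obtain ⟨t, ht⟩ := hker1 x (hkerk k x hk)
      rw [ht]
      exact Submodule.smul_mem _ _ (Submodule.mem_span_singleton_self vc)
    · rw [Submodule.span_le, Set.singleton_subset_iff, SetLike.mem_coe,
        Module.End.mem_maxGenEigenspace]
      refine ⟨1, ?_⟩
      simp only [zero_smul, sub_zero, pow_one]
      rw [Matrix.toLin'_apply, hN, Matrix.sub_mulVec, Matrix.smul_mulVec,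
        Matrix.one_mulVec, hMcv, sub_self]
  rw [hmult1, hmult2, hφeq, ← LinearMap.finrank_maxGenEigenspace_zero_eq, hspan]
  exact finrank_span_singleton hvc0
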